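/- For every integer m ≥ 3, every hereditary m-stable m-pattern 𝒫 is permutation stable: for every permutation σ of {1,…,m}, if σ𝒫 is also a hereditary m-stable m-pattern, then σ𝒫 = 𝒫. -/
import Mathlib


open Finset

/-- `vec m` is the set `{1, …, m}`. -/
def vec (m : ℕ) : Finset ℕ := Finset.Icc 1 m

/-- `IsNOP s k C` : `C 1, …, C k` form a naturally ordered partition of `{1, …, s}`
into `k` nonempty sets. -/
def IsNOP (s k : ℕ) (C : ℕ → Finset ℕ) : Prop :=
  (∀ i ∈ Finset.Icc 1 k, (C i).Nonempty) ∧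
  (∀ i ∈ Finset.Icc 1 k, ∀ j ∈ Finset.Icc 1 k, i ≠ j → Disjoint (C i) (C j)) ∧
  (Finset.Icc 1 k).biUnion C = Finset.Icc 1 s ∧
  (∀ i ∈ Finset.Icc 1 k, ∀ j ∈ Finset.Icc 1 k, i < j → (C i).min < (C j).min)

/-- The induced subset `P_γ`. -/
def indSet (C : ℕ → Finset ℕ) (k : ℕ) (P : Finset ℕ) : Finset ℕ :=
  (Finset.Icc 1 k).filter fun j => ((C j) ∩ P).Nonempty

/-- The induced pattern `𝒫_γ`. -/
def indPat (C : ℕ → Finset ℕ) (k : ℕ) (P : Set (Finset ℕ)) : Set (Finset ℕ) :=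
  indSet C k '' P

/-- An `m`-pattern: a nonempty collection of nonempty subsets of `{1, …, m}`. -/
def IsPattern (m : ℕ) (P : Set (Finset ℕ)) : Prop :=
  P.Nonempty ∧ ∀ Q ∈ P, Finset.Nonempty Q ∧ Q ⊆ vec m

/-- `k`-stability of an `m`-pattern. -/
def IsStable (m k : ℕ) (P : Set (Finset ℕ)) : Prop :=
  ∀ k', 2 ≤ k' → k' ≤ k → ∀ α β : ℕ → Finset ℕ,
    IsNOP m k' α → IsNOP m k' β → indPat α k' P = indPat β k' P

/-- `φ_m = {{1},{1,2},…,{1,…,m}}`. -/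
def phiPat (m : ℕ) : Set (Finset ℕ) :=
  { S | ∃ l, 1 ≤ l ∧ l ≤ m ∧ S = Finset.Icc 1 l }

/-- `A_{j,m}`: nonempty subsets of `{1,…,m}` of cardinality at most `j`. -/
def APat (j m : ℕ) : Set (Finset ℕ) :=
  { S | S.Nonempty ∧ S ⊆ vec m ∧ S.card ≤ j }

/-- `A¹_{j,m}`: subsets of `{1,…,m}` of cardinality at most `j` containing `1`. -/
def A1Pat (j m : ℕ) : Set (Finset ℕ) :=
  { S | 1 ∈ S ∧ S ⊆ vec m ∧ S.card ≤ j }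

/-- `H^m_{h,l}`: complements in `{1,…,m}` of a set of `h` holes, all lying in `[l,m]`. -/
def HPat (m h l : ℕ) : Set (Finset ℕ) :=
  { S | ∃ D : Finset ℕ, D.card = h ∧ D ⊆ Finset.Icc l m ∧ S = vec m \ D }

/-- `EH^m_{h,l}`: complements in `{1,…,m}` of a set of `h` holes, all in `[l,m]`,
whose first hole equals `l`. -/
def EHPat (m h l : ℕ) : Set (Finset ℕ) :=
  { S | ∃ D : Finset ℕ, D.card = h ∧ D ⊆ Finset.Icc l m ∧ l ∈ D ∧ S = vec m \ D }

/-- `D^m_{r,s} = A¹_{m-r-1,m} ∪ ⋃_{h=1}^{r} H^m_{h,s-h+1} ∪ {m⃗}`. -/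
def DPat (m r s : ℕ) : Set (Finset ℕ) :=
  A1Pat (m - r - 1) m ∪ (⋃ h ∈ Finset.Icc 1 r, HPat m h (s - h + 1)) ∪ {vec m}

/-- `γ_{i,j} ∈ Π(m+1,m)` (for `1 ≤ i < j ≤ m+1`): the naturally ordered partition of
`{1,…,m+1}` into `m` blocks, namely `{i,j}` together with the singletons of the
remaining points. -/
def gammaIJ (i j : ℕ) : ℕ → Finset ℕ :=
  fun t => if t = i then {i, j} else if t < j then {t} else {t + 1}

/-- A hereditary `m`-stable `m`-pattern. -/
def IsHSP (m : ℕ) (P : Set (Finset ℕ)) : Prop :=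
  IsPattern m P ∧ IsStable m m P ∧
  ∀ m', m < m' → ∃ Q : Set (Finset ℕ), IsPattern m' Q ∧ IsStable m' m' Q ∧
    ∀ γ : ℕ → Finset ℕ, IsNOP m' m γ → indPat γ m Q = P

/-- Unique stable lifts. -/
def HasUSL (m : ℕ) (P : Set (Finset ℕ)) : Prop :=
  ∀ m', m < m' → ∃! Q : Set (Finset ℕ),
    IsPattern m' Q ∧ IsStable m' m' Q ∧
    ∀ γ : ℕ → Finset ℕ, IsNOP m' m γ → indPat γ m Q = P

section Stmt13Aux

open Finset

/-! ### Auxiliary lemmas for `stmt13` -/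

lemma mem_gammaIJ {i j t u : ℕ} :
    u ∈ gammaIJ i j t ↔
      (t = i ∧ (u = i ∨ u = j)) ∨ (t ≠ i ∧ t < j ∧ u = t) ∨ (t ≠ i ∧ j ≤ t ∧ u = t + 1) := by
  unfold gammaIJ
  split_ifs with h1 h2 <;> simp [Finset.mem_insert, Finset.mem_singleton] <;> omega

lemma min_gammaIJ {i j : ℕ} (hij : i < j) (t : ℕ) :
    (gammaIJ i j t).min = ((if t < j then t else t + 1 : ℕ) : WithTop ℕ) := by
  unfold gammaIJ
  split_ifs with h1 h2
  · -- t = i, t < j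
    subst h1
    rw [show ({t, j} : Finset ℕ) = insert t {j} from rfl, Finset.min_insert,
      Finset.min_singleton]
    exact min_eq_left (by exact_mod_cast hij.le)
  · -- t = i, ¬ t < j : contradiction since i < j
    exact absurd (h1 ▸ hij) h2
  · exact Finset.min_singleton
  · exact Finset.min_singleton

lemma isNOP_gammaIJ {m i j : ℕ} (h1 : 1 ≤ i) (hij : i < j) (hj : j ≤ m + 1) :
    IsNOP (m + 1) m (gammaIJ i j) := by
  refine ⟨?_, ?_, ?_, ?_⟩
  · intro t _
    unfold gammaIJ
    split_ifs <;> simp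
  · intro t ht t' ht' hne
    rw [Finset.disjoint_left]
    intro u hu hu'
    rw [mem_gammaIJ] at hu hu'
    omega
  · ext u
    simp only [Finset.mem_biUnion, Finset.mem_Icc]
    constructor
    · rintro ⟨t, ht, hu⟩
      rw [mem_gammaIJ] at hu
      omega
    · intro hu
      by_cases hcase : u = j
      · exact ⟨i, by omega, by rw [mem_gammaIJ]; omega⟩
      by_cases hcase2 : u < j
      · exact ⟨u, by omega, by rw [mem_gammaIJ]; omega⟩
      · exact ⟨u - 1, by omega, by rw [mem_gammaIJ]; omega⟩
  · intro t ht t' ht' hlt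
    rw [Finset.mem_Icc] at ht ht'
    rw [min_gammaIJ hij, min_gammaIJ hij]
    have h : (if t < j then t else t + 1) < (if t' < j then t' else t' + 1) := by
      split_ifs <;> omega
    exact_mod_cast h

/-- Hereditary stable patterns are closed under adjacent downward swaps. -/
lemma hsp_swapclosed {m : ℕ} {P : Set (Finset ℕ)} (hP : IsHSP m P) :
    ∀ S ∈ P, ∀ a : ℕ, 1 ≤ a → a + 1 ∈ S → a ∉ S → insert a (S.erase (a + 1)) ∈ P := by
  intro S hS a ha haS hnaS
  have hSsub : S ⊆ vec m := (hP.1.2 S hS).2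
  have ham : a + 1 ≤ m := by
    have := hSsub haS
    rw [vec, Finset.mem_Icc] at this
    omega
  obtain ⟨Q, hQpat, -, hind⟩ := hP.2.2 (m + 1) (by omega)
  have hnop1 : IsNOP (m + 1) m (gammaIJ a (a + 1)) := isNOP_gammaIJ ha (by omega) (by omega)
  have hnop2 : IsNOP (m + 1) m (gammaIJ a (a + 2)) := isNOP_gammaIJ ha (by omega) (by omega)
  have h1 := hind _ hnop1
  have h2 := hind _ hnop2
  rw [← h1] at hS
  obtain ⟨T, hT, hTS⟩ := hS
  rw [← h2]
  refine ⟨T, hT, ?_⟩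
  have hmem : ∀ t : ℕ, t ∈ S ↔ (t ∈ Finset.Icc 1 m ∧ (gammaIJ a (a + 1) t ∩ T).Nonempty) := by
    intro t
    rw [← hTS]
    simp [indSet, Finset.mem_filter]
  have hga : gammaIJ a (a + 1) a = {a, a + 1} := by simp [gammaIJ]
  have hga1 : gammaIJ a (a + 1) (a + 1) = {a + 2} := by
    unfold gammaIJ
    rw [if_neg (by omega), if_neg (by omega)]
  have hIcc_a : a ∈ Finset.Icc 1 m := Finset.mem_Icc.mpr ⟨ha, by omega⟩
  have hempty : ¬ ((gammaIJ a (a + 1) a ∩ T).Nonempty) := by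
    intro hne
    exact hnaS ((hmem a).mpr ⟨hIcc_a, hne⟩)
  rw [hga] at hempty
  have haT : a ∉ T := fun h =>
    hempty ⟨a, Finset.mem_inter.mpr ⟨by simp, h⟩⟩
  have ha1T : a + 1 ∉ T := fun h =>
    hempty ⟨a + 1, Finset.mem_inter.mpr ⟨by simp, h⟩⟩
  have ha2T : a + 2 ∈ T := by
    have hh := ((hmem (a + 1)).mp haS).2
    rw [hga1] at hh
    obtain ⟨u, hu⟩ := hh
    rw [Finset.mem_inter, Finset.mem_singleton] at hu
    rw [← hu.1]
    exact hu.2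
  ext t
  simp only [indSet, Finset.mem_filter, Finset.mem_insert, Finset.mem_erase]
  by_cases hta : t = a
  · subst hta
    have hblk : gammaIJ t (t + 2) t = {t, t + 2} := by simp [gammaIJ]
    constructor
    · intro _; left; rfl
    · intro _
      refine ⟨hIcc_a, ?_⟩
      rw [hblk]
      exact ⟨t + 2, Finset.mem_inter.mpr ⟨by simp, ha2T⟩⟩
  by_cases hta1 : t = a + 1
  · subst hta1
    have hblk : gammaIJ a (a + 2) (a + 1) = {a + 1} := by
      unfold gammaIJ
      rw [if_neg (by omega), if_pos (by omega)]
    constructor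
    · rintro ⟨-, u, hu⟩
      rw [hblk, Finset.mem_inter, Finset.mem_singleton] at hu
      exact absurd (hu.1 ▸ hu.2) ha1T
    · intro h
      rcases h with h | h
      · omega
      · exact absurd rfl h.1
  · have hblocks : gammaIJ a (a + 2) t = gammaIJ a (a + 1) t := by
      unfold gammaIJ
      rw [if_neg hta, if_neg hta]
      by_cases h : t < a + 1
      · rw [if_pos h, if_pos (by omega)]
      · rw [if_neg h, if_neg (by omega)]
    rw [hblocks]
    rw [hmem t] at *
    constructor
    · intro h; exact Or.inr ⟨hta1, h⟩
    · rintro (h | h)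
      · exact absurd h hta
      · exact h.2

/-- Adjacent-downward-swap closure for finite families. -/
def SwclF (F : Finset (Finset ℕ)) : Prop :=
  ∀ S ∈ F, ∀ a : ℕ, 1 ≤ a → a + 1 ∈ S → a ∉ S → insert a (S.erase (a + 1)) ∈ F

/-- Degree of a point in a family. -/
def famDeg (F : Finset (Finset ℕ)) (z : ℕ) : ℕ := (F.filter (fun S => z ∈ S)).card

lemma iota_maps {F : Finset (Finset ℕ)} (h : SwclF F) {a : ℕ} (ha : 1 ≤ a) :
    ∀ S ∈ F.filter (fun S => a + 1 ∈ S),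
      (if a ∈ S then S else insert a (S.erase (a + 1))) ∈ F.filter (fun S => a ∈ S) := by
  intro S hS
  rw [Finset.mem_filter] at hS ⊢
  by_cases hmem : a ∈ S
  · rw [if_pos hmem]; exact ⟨hS.1, hmem⟩
  · rw [if_neg hmem]
    exact ⟨h S hS.1 a ha hS.2 hmem, Finset.mem_insert_self _ _⟩

lemma iota_injOn {F : Finset (Finset ℕ)} {a : ℕ} :
    Set.InjOn (fun S : Finset ℕ => if a ∈ S then S else insert a (S.erase (a + 1)))
      (F.filter (fun S => a + 1 ∈ S) : Finset (Finset ℕ)) := by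
  intro S1 h1 S2 h2 heq
  simp only [Finset.coe_filter, Set.mem_setOf_eq] at h1 h2
  simp only at heq
  have hnm : ∀ S : Finset ℕ, a ∉ S → a ∉ S.erase (a + 1) :=
    fun S hS hc => hS (Finset.mem_of_mem_erase hc)
  by_cases m1 : a ∈ S1 <;> by_cases m2 : a ∈ S2
  · rwa [if_pos m1, if_pos m2] at heq
  · rw [if_pos m1, if_neg m2] at heq
    exfalso
    have : a + 1 ∈ insert a (S2.erase (a + 1)) := heq ▸ h1.2
    rw [Finset.mem_insert, Finset.mem_erase] at this
    omega
  · rw [if_neg m1, if_pos m2] at heq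
    exfalso
    have : a + 1 ∈ insert a (S1.erase (a + 1)) := heq ▸ h2.2
    rw [Finset.mem_insert, Finset.mem_erase] at this
    omega
  · rw [if_neg m1, if_neg m2] at heq
    have e1 : S1.erase (a + 1) = S2.erase (a + 1) := by
      have h := congrArg (fun s => Finset.erase s a) heq
      simpa [Finset.erase_insert (hnm S1 m1), Finset.erase_insert (hnm S2 m2)] using h
    calc S1 = insert (a + 1) (S1.erase (a + 1)) := (Finset.insert_erase h1.2).symm
      _ = insert (a + 1) (S2.erase (a + 1)) := by rw [e1]
      _ = S2 := Finset.insert_erase h2.2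

lemma famDeg_anti {F : Finset (Finset ℕ)} (h : SwclF F) {a : ℕ} (ha : 1 ≤ a) :
    famDeg F (a + 1) ≤ famDeg F a :=
  Finset.card_le_card_of_injOn _ (iota_maps h ha) iota_injOn

lemma famDeg_mono {F : Finset (Finset ℕ)} (h : SwclF F) :
    ∀ u v : ℕ, 1 ≤ u → u ≤ v → famDeg F v ≤ famDeg F u := by
  intro u v hu huv
  induction v, huv using Nat.le_induction with
  | base => exact le_rfl
  | succ n hn ih => exact le_trans (famDeg_anti h (by omega)) ih

lemma upswap {F : Finset (Finset ℕ)} (h : SwclF F) {a : ℕ} (ha : 1 ≤ a)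
    (hdeg : famDeg F a = famDeg F (a + 1)) :
    ∀ S ∈ F, a ∈ S → a + 1 ∉ S → insert (a + 1) (S.erase a) ∈ F := by
  classical
  intro S hS haS hna1S
  have himg : (F.filter (fun V => a + 1 ∈ V)).image
      (fun V => if a ∈ V then V else insert a (V.erase (a + 1)))
      = F.filter (fun V => a ∈ V) := by
    apply Finset.eq_of_subset_of_card_le
    · intro W hW
      rw [Finset.mem_image] at hW
      obtain ⟨V, hV, rfl⟩ := hW
      exact iota_maps h ha V hV
    · rw [Finset.card_image_of_injOn iota_injOn]
      exact hdeg.le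
  have hSin : S ∈ (F.filter (fun V => a + 1 ∈ V)).image
      (fun V => if a ∈ V then V else insert a (V.erase (a + 1))) := by
    rw [himg, Finset.mem_filter]; exact ⟨hS, haS⟩
  rw [Finset.mem_image] at hSin
  obtain ⟨V, hV, hVS⟩ := hSin
  rw [Finset.mem_filter] at hV
  by_cases hmem : a ∈ V
  · simp only [if_pos hmem] at hVS
    exact absurd (hVS ▸ hV.2) hna1S
  · simp only [if_neg hmem] at hVS
    have hnm : a ∉ V.erase (a + 1) := fun hc => hmem (Finset.mem_of_mem_erase hc)
    have hrec : insert (a + 1) (S.erase a) = V := by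
      rw [← hVS, Finset.erase_insert hnm]
      exact Finset.insert_erase hV.2
    rw [hrec]
    exact hV.1

lemma image_swap_of_mem_not_mem {a b : ℕ} {S : Finset ℕ} (ha : a ∈ S) (hb : b ∉ S) :
    S.image (Equiv.swap a b) = insert b (S.erase a) := by
  ext u
  simp only [Finset.mem_image, Finset.mem_insert, Finset.mem_erase]
  constructor
  · rintro ⟨v, hv, rfl⟩
    rcases eq_or_ne v a with rfl | hva
    · left; exact Equiv.swap_apply_left v b
    rcases eq_or_ne v b with rfl | hvb
    · exact absurd hv hb
    · rw [Equiv.swap_apply_of_ne_of_ne hva hvb]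
      exact Or.inr ⟨hva, hv⟩
  · rintro (rfl | ⟨hua, hu⟩)
    · exact ⟨a, ha, Equiv.swap_apply_left a u⟩
    · have hub : u ≠ b := fun hc => hb (hc ▸ hu)
      exact ⟨u, hu, Equiv.swap_apply_of_ne_of_ne hua hub⟩

lemma image_swap_of_not_mem_not_mem {a b : ℕ} {S : Finset ℕ} (ha : a ∉ S) (hb : b ∉ S) :
    S.image (Equiv.swap a b) = S := by
  have h : ∀ v ∈ S, Equiv.swap a b v = v := fun v hv =>
    Equiv.swap_apply_of_ne_of_ne (fun h => ha (h ▸ hv)) (fun h => hb (h ▸ hv))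
  calc S.image (Equiv.swap a b) = S.image id := Finset.image_congr h
    _ = S := Finset.image_id

lemma image_swap_of_mem_mem {a b : ℕ} {S : Finset ℕ} (ha : a ∈ S) (hb : b ∈ S) :
    S.image (Equiv.swap a b) = S := by
  apply Finset.eq_of_subset_of_card_le
  · intro u hu
    rw [Finset.mem_image] at hu
    obtain ⟨v, hv, rfl⟩ := hu
    rcases eq_or_ne v a with rfl | hva
    · rwa [Equiv.swap_apply_left]
    rcases eq_or_ne v b with rfl | hvb
    · rwa [Equiv.swap_apply_right]
    · rwa [Equiv.swap_apply_of_ne_of_ne hva hvb]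
  · rw [Finset.card_image_of_injective _ (Equiv.injective _)]

lemma pattern_swap_adj {F : Finset (Finset ℕ)} (h : SwclF F) {a : ℕ} (ha : 1 ≤ a)
    (hdeg : famDeg F a = famDeg F (a + 1)) :
    F.image (fun S => S.image (Equiv.swap a (a + 1))) = F := by
  apply Finset.eq_of_subset_of_card_le
  · intro W hW
    rw [Finset.mem_image] at hW
    obtain ⟨S, hS, rfl⟩ := hW
    by_cases h1 : a ∈ S <;> by_cases h2 : a + 1 ∈ S
    · rwa [image_swap_of_mem_mem h1 h2]
    · rw [image_swap_of_mem_not_mem h1 h2]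
      exact upswap h ha hdeg S hS h1 h2
    · rw [Equiv.swap_comm, image_swap_of_mem_not_mem h2 h1]
      exact h S hS a ha h2 h1
    · rwa [image_swap_of_not_mem_not_mem h1 h2]
  · rw [Finset.card_image_of_injective _ (Finset.image_injective (Equiv.injective _))]

lemma pattern_swap {F : Finset (Finset ℕ)} (h : SwclF F) :
    ∀ n a b : ℕ, b - a ≤ n → 1 ≤ a → a < b → famDeg F a = famDeg F b →
      F.image (fun S => S.image (Equiv.swap a b)) = F := by
  intro n
  induction n with
  | zero => intro a b hn ha hab hdeg; omega
  | succ n ih =>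
    intro a b hn ha hab hdeg
    rcases eq_or_lt_of_le (Nat.succ_le_of_lt hab) with heq | hlt
    · rw [← heq] at hdeg ⊢
      exact pattern_swap_adj h ha hdeg
    · -- a + 1 < b
      have hd : ∀ z, a ≤ z → z ≤ b → famDeg F z = famDeg F a := by
        intro z hz1 hz2
        have h1 : famDeg F z ≤ famDeg F a := famDeg_mono h a z ha hz1
        have h2 : famDeg F b ≤ famDeg F z := famDeg_mono h z b (by omega) hz2
        omega
      set t := Equiv.swap (a + 1) b with htdef
      set s := Equiv.swap a (a + 1) with hsdef
      have himg : ∀ S : Finset ℕ,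
          S.image (Equiv.swap a b) = ((S.image t).image s).image t := by
        intro S
        rw [Finset.image_image, Finset.image_image]
        apply Finset.image_congr
        intro v _
        simp only [Function.comp_apply, htdef, hsdef, Equiv.swap_apply_def]
        split_ifs <;> omega
      have hIH1 : F.image (fun S => S.image t) = F :=
        ih (a + 1) b (by omega) (by omega) hlt (by rw [hd (a + 1) (by omega) (by omega),
          ← hdeg])
      have hadj : F.image (fun S => S.image s) = F :=
        pattern_swap_adj h ha (by rw [← hd (a + 1) (by omega) (by omega)])
      have hstep : ((F.image (fun S => S.image t)).image (fun S => S.image s)).image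
          (fun S => S.image t) = F := by
        rw [hIH1, hadj, hIH1]
      have hdecomp : F.image (fun S => S.image (Equiv.swap a b)) =
          ((F.image (fun S => S.image t)).image (fun S => S.image s)).image
            (fun S => S.image t) := by
        rw [Finset.image_image, Finset.image_image]
        apply Finset.image_congr
        intro S _
        exact himg S
      rw [hdecomp, hstep]

lemma pattern_id {F : Finset (Finset ℕ)} {τ : Equiv.Perm ℕ} (hid : ∀ u : ℕ, τ u = u) :
    F.image (fun S => S.image τ) = F := by
  have h : ∀ S : Finset ℕ, S.image τ = S := by
    intro S
    calc S.image ⇑τ = S.image id := Finset.image_congr (fun v _ => hid v)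
      _ = S := Finset.image_id
  calc F.image (fun S => S.image τ) = F.image id := Finset.image_congr (fun S _ => h S)
    _ = F := Finset.image_id

lemma pattern_perm {F : Finset (Finset ℕ)} (m : ℕ) (h : SwclF F) :
    ∀ n (τ : Equiv.Perm ℕ),
      ((Finset.Icc 1 m).filter (fun z => τ z ≠ z)).card ≤ n →
      (∀ x, x ∉ Finset.Icc 1 m → τ x = x) →
      (∀ z ∈ Finset.Icc 1 m, famDeg F (τ z) = famDeg F z) →
      F.image (fun S => S.image τ) = F := by
  intro n
  induction n with
  | zero =>
    intro τ hcard hfix hdeg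
    apply pattern_id
    intro u
    by_cases hu : u ∈ Finset.Icc 1 m
    · by_contra hne
      have hmemf : u ∈ (Finset.Icc 1 m).filter (fun z => τ z ≠ z) :=
        Finset.mem_filter.mpr ⟨hu, hne⟩
      have := Finset.card_pos.mpr ⟨u, hmemf⟩
      omega
    · exact hfix u hu
  | succ n ih =>
    intro τ hcard hfix hdeg
    by_cases hz : ∃ z ∈ Finset.Icc 1 m, τ z ≠ z
    case neg =>
      apply pattern_id
      intro u
      by_cases hu : u ∈ Finset.Icc 1 m
      · by_contra hne
        exact hz ⟨u, hu, hne⟩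
      · exact hfix u hu
    obtain ⟨z, hzI, hzne⟩ := hz
    have hτz_mem : τ z ∈ Finset.Icc 1 m := by
      by_contra hc
      exact hzne (τ.injective (hfix (τ z) hc))
    set w := Equiv.swap z (τ z) with hwdef
    set ρ := w * τ with hρdef
    have hdzτ : famDeg F (τ z) = famDeg F z := hdeg z hzI
    have hwdeg : ∀ u, famDeg F (w u) = famDeg F u := by
      intro u
      rcases eq_or_ne u z with rfl | h1
      · rw [hwdef, Equiv.swap_apply_left]; exact hdzτ
      rcases eq_or_ne u (τ z) with rfl | h2
      · rw [hwdef, Equiv.swap_apply_right]; exact hdzτ.symm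
      · rw [hwdef, Equiv.swap_apply_of_ne_of_ne h1 h2]
    have hρfix : ∀ x, x ∉ Finset.Icc 1 m → ρ x = x := by
      intro x hx
      have h2 : x ≠ z := fun hc => hx (hc ▸ hzI)
      have h3 : x ≠ τ z := fun hc => hx (hc ▸ hτz_mem)
      show w (τ x) = x
      rw [hfix x hx, hwdef, Equiv.swap_apply_of_ne_of_ne h2 h3]
    have hρdeg : ∀ y ∈ Finset.Icc 1 m, famDeg F (ρ y) = famDeg F y := by
      intro y hy
      show famDeg F (w (τ y)) = famDeg F y
      rw [hwdeg (τ y)]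
      exact hdeg y hy
    have hρsupp : ((Finset.Icc 1 m).filter (fun y => ρ y ≠ y)).card ≤ n := by
      have hsub : (Finset.Icc 1 m).filter (fun y => ρ y ≠ y) ⊆
          ((Finset.Icc 1 m).filter (fun y => τ y ≠ y)).erase z := by
        intro y hy
        rw [Finset.mem_filter] at hy
        rw [Finset.mem_erase, Finset.mem_filter]
        have hyz : y ≠ z := by
          intro hc
          subst hc
          apply hy.2
          show w (τ y) = y
          rw [hwdef, Equiv.swap_apply_right]
        refine ⟨hyz, hy.1, ?_⟩
        intro hτy
        apply hy.2
        show w (τ y) = y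
        rw [hτy, hwdef]
        have hyτz : y ≠ τ z := by
          intro hc
          rw [hc] at hτy
          exact hzne (τ.injective hτy)
        rw [Equiv.swap_apply_of_ne_of_ne hyz hyτz]
      have h1 := Finset.card_le_card hsub
      have hzf : z ∈ (Finset.Icc 1 m).filter (fun y => τ y ≠ y) :=
        Finset.mem_filter.mpr ⟨hzI, hzne⟩
      rw [Finset.card_erase_of_mem hzf] at h1
      omega
    have hIH := ih ρ hρsupp hρfix hρdeg
    have hcomp : F.image (fun S => S.image τ) =
        (F.image (fun S => S.image ρ)).image (fun S => S.image w) := by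
      rw [Finset.image_image]
      apply Finset.image_congr
      intro S _
      show S.image ⇑τ = (S.image ⇑ρ).image ⇑w
      rw [Finset.image_image]
      apply Finset.image_congr
      intro v _
      show τ v = w (ρ v)
      have hval : w (ρ v) = τ v := by
        show w (w (τ v)) = τ v
        rw [hwdef]
        exact Equiv.swap_apply_self _ _ _
      exact hval.symm
    rw [hcomp, hIH]
    rcases lt_trichotomy z (τ z) with hlt | heq | hgt
    · rw [Finset.mem_Icc] at hzI
      exact pattern_swap h (τ z - z) z (τ z) le_rfl hzI.1 hlt hdzτ.symm
    · exact absurd heq.symm hzne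
    · rw [Finset.mem_Icc] at hτz_mem
      rw [hwdef, Equiv.swap_comm]
      exact pattern_swap h (z - τ z) (τ z) z le_rfl hτz_mem.1 hgt hdzτ

lemma anti_count_char (d : ℕ → ℕ) (m : ℕ)
    (anti : ∀ u v : ℕ, 1 ≤ u → u ≤ v → d v ≤ d u)
    {z : ℕ} (hz : z ∈ Finset.Icc 1 m) (c : ℕ) :
    c ≤ d z ↔ z ≤ ((Finset.Icc 1 m).filter (fun w => c ≤ d w)).card := by
  rw [Finset.mem_Icc] at hz
  constructor
  · intro hc
    have hsub : Finset.Icc 1 z ⊆ (Finset.Icc 1 m).filter (fun w => c ≤ d w) := by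
      intro w hw
      rw [Finset.mem_Icc] at hw
      rw [Finset.mem_filter, Finset.mem_Icc]
      exact ⟨⟨hw.1, le_trans hw.2 hz.2⟩, le_trans hc (anti w z hw.1 hw.2)⟩
    have h1 := Finset.card_le_card hsub
    rw [Nat.card_Icc] at h1
    omega
  · intro hcard
    by_contra hc
    push_neg at hc
    have hsub : (Finset.Icc 1 m).filter (fun w => c ≤ d w) ⊆ Finset.Icc 1 (z - 1) := by
      intro w hw
      rw [Finset.mem_filter, Finset.mem_Icc] at hw
      rw [Finset.mem_Icc]
      refine ⟨hw.1.1, ?_⟩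
      by_contra hwz
      push_neg at hwz
      have h2 : d w ≤ d z := anti z w hz.1 (by omega)
      omega
    have h1 := Finset.card_le_card hsub
    rw [Nat.card_Icc] at h1
    omega

lemma anti_eq (d d' : ℕ → ℕ) (m : ℕ)
    (anti : ∀ u v : ℕ, 1 ≤ u → u ≤ v → d v ≤ d u)
    (anti' : ∀ u v : ℕ, 1 ≤ u → u ≤ v → d' v ≤ d' u)
    (hcount : ∀ c, ((Finset.Icc 1 m).filter (fun w => c ≤ d w)).card =
      ((Finset.Icc 1 m).filter (fun w => c ≤ d' w)).card) :
    ∀ z ∈ Finset.Icc 1 m, d z = d' z := by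
  intro z hz
  have h1 : d' z ≤ d z := by
    rw [anti_count_char d m anti hz, hcount]
    exact (anti_count_char d' m anti' hz (d' z)).mp le_rfl
  have h2 : d z ≤ d' z := by
    rw [anti_count_char d' m anti' hz, ← hcount]
    exact (anti_count_char d m anti hz (d z)).mp le_rfl
  omega

end Stmt13Aux

theorem stmt13 (m : ℕ) (hm : 3 ≤ m) (P : Set (Finset ℕ)) (hP : IsHSP m P)
    (σ : Equiv.Perm ℕ) (hσ : ∀ x : ℕ, x ∉ vec m → σ x = x)
    (hσP : IsHSP m ((fun Q : Finset ℕ => Q.image σ) '' P)) :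
    (fun Q : Finset ℕ => Q.image σ) '' P = P := by
  classical
  have hfin : P.Finite := by
    apply Set.Finite.subset (Finset.finite_toSet ((vec m).powerset))
    intro S hS
    rw [Finset.mem_coe, Finset.mem_powerset]
    exact (hP.1.2 S hS).2
  set F : Finset (Finset ℕ) := hfin.toFinset with hFdef
  have hFP : ↑F = P := hfin.coe_toFinset
  set F' : Finset (Finset ℕ) := F.image (fun S => S.image σ) with hF'def
  have hF'P : ↑F' = (fun Q : Finset ℕ => Q.image σ) '' P := by
    rw [hF'def, Finset.coe_image, hFP]
  have hswF : SwclF F := by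
    intro S hS a ha h1 h2
    rw [hFdef, Set.Finite.mem_toFinset] at hS ⊢
    exact hsp_swapclosed hP S hS a ha h1 h2
  have hswF' : SwclF F' := by
    intro S hS a ha h1 h2
    have hS2 : S ∈ ((fun Q : Finset ℕ => Q.image σ) '' P) := by
      rw [← hF'P]; exact hS
    have := hsp_swapclosed hσP S hS2 a ha h1 h2
    rw [← Finset.mem_coe, hF'P]
    exact this
  have hσI : ∀ z, z ∈ Finset.Icc 1 m ↔ σ z ∈ Finset.Icc 1 m := by
    intro z
    constructor
    · intro hz
      by_contra hc
      have h1 : σ (σ z) = σ z := hσ (σ z) (by rw [vec]; exact hc)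
      have h2 := σ.injective h1
      rw [h2] at hc
      exact hc hz
    · intro hz
      by_contra hc
      have h1 : σ z = z := hσ z (by rw [vec]; exact hc)
      rw [h1] at hz
      exact hc hz
  have hdeg' : ∀ z, famDeg F' z = famDeg F (σ.symm z) := by
    intro z
    unfold famDeg
    have himg : F'.filter (fun S => z ∈ S)
        = (F.filter (fun S => σ.symm z ∈ S)).image (fun S => S.image σ) := by
      rw [hF'def]
      ext W
      simp only [Finset.mem_filter, Finset.mem_image]
      constructor
      · rintro ⟨⟨S, hS, rfl⟩, hz⟩
        refine ⟨S, ⟨hS, ?_⟩, rfl⟩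
        rw [Finset.mem_image] at hz
        obtain ⟨v, hv, hvz⟩ := hz
        have hveq : v = σ.symm z := by
          rw [← hvz, Equiv.symm_apply_apply]
        rwa [← hveq]
      · rintro ⟨S, ⟨hS, hz⟩, rfl⟩
        refine ⟨⟨S, hS, rfl⟩, ?_⟩
        rw [Finset.mem_image]
        exact ⟨σ.symm z, hz, Equiv.apply_symm_apply σ z⟩
    rw [himg, Finset.card_image_of_injective _ (Finset.image_injective σ.injective)]
  have hanti : ∀ u v : ℕ, 1 ≤ u → u ≤ v → famDeg F v ≤ famDeg F u := famDeg_mono hswF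
  have hanti' : ∀ u v : ℕ, 1 ≤ u → u ≤ v → famDeg F' v ≤ famDeg F' u := famDeg_mono hswF'
  have hcount : ∀ c, ((Finset.Icc 1 m).filter (fun w => c ≤ famDeg F w)).card =
      ((Finset.Icc 1 m).filter (fun w => c ≤ famDeg F' w)).card := by
    intro c
    apply Finset.card_bij (fun w _ => σ w)
    · intro w hw
      rw [Finset.mem_filter] at hw ⊢
      refine ⟨(hσI w).mp hw.1, ?_⟩
      rw [hdeg' (σ w), Equiv.symm_apply_apply]
      exact hw.2
    · intro w1 _ w2 _ heq
      exact σ.injective heq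
    · intro w hw
      rw [Finset.mem_filter] at hw
      have hmem : σ.symm w ∈ Finset.Icc 1 m := by
        rw [hσI (σ.symm w), Equiv.apply_symm_apply]
        exact hw.1
      refine ⟨σ.symm w, Finset.mem_filter.mpr ⟨hmem, ?_⟩, Equiv.apply_symm_apply σ w⟩
      rw [← hdeg' w]
      exact hw.2
  have hdeq : ∀ z ∈ Finset.Icc 1 m, famDeg F z = famDeg F' z :=
    anti_eq _ _ m hanti hanti' hcount
  have hdegσ : ∀ z ∈ Finset.Icc 1 m, famDeg F (σ z) = famDeg F z := by
    intro z hz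
    have h1 := hdeq (σ z) ((hσI z).mp hz)
    rw [hdeg' (σ z), Equiv.symm_apply_apply] at h1
    exact h1
  have hfix : ∀ x, x ∉ Finset.Icc 1 m → σ x = x := by
    intro x hx
    exact hσ x (by rw [vec]; exact hx)
  have hperm := pattern_perm m hswF
    (((Finset.Icc 1 m).filter (fun z => σ z ≠ z)).card) σ le_rfl hfix hdegσ
  rw [← hF'P, hF'def, hperm, hFP]
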